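/- Let R be a commutative ring and M a faithful R-module. If the clique number ω(G_M(R)) of the M-intersection graph is finite, then the Jacobson radical of R equals the nilradical of R: J(R) = Nil(R). -/

import Mathlib

/-- The `M`-intersection graph of ideals of `R`: vertices are the nontrivial ideals of `R`,
and two distinct vertices `I`, `J` are adjacent iff `IM ∩ JM ≠ 0`. -/
def interGraph (R M : Type*) [CommRing R] [AddCommGroup M] [Module R M] :
    SimpleGraph {I : Ideal R // I ≠ ⊥ ∧ I ≠ ⊤} where
  Adj I J := I ≠ J ∧ (I.1 • ⊤ ⊓ J.1 • ⊤ : Submodule R M) ≠ ⊥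
  symm := ⟨fun I J h => ⟨h.1.symm, by rw [inf_comm]; exact h.2⟩⟩
  loopless := ⟨fun I h => h.1 rfl⟩

/-- If `M` is a faithful module over a commutative ring `R` and the clique
number of `G_M(R)` is finite, then the Jacobson radical of `R` equals its nilradical. -/
theorem jacobson_eq_nilradical (R M : Type*) [CommRing R] [AddCommGroup M]
    [Module R M] [Nontrivial M]
    (hfaith : (⊤ : Submodule R M).annihilator = ⊥)
    (hfin : BddAbove {n : ℕ | ∃ s, (interGraph R M).IsNClique n s}) :
    (⊥ : Ideal R).jacobson = nilradical R := by
  classical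
  have hRnt : Nontrivial R := Module.nontrivial R M
  refine le_antisymm ?_ Ideal.radical_le_jacobson
  intro a ha
  rw [mem_nilradical]
  by_contra hnil
  have hpow : ∀ k : ℕ, a ^ k ≠ 0 := fun k hk => hnil ⟨k, hk⟩
  -- for any nonzero ideal I, I • ⊤ ≠ ⊥
  have hsmul : ∀ I : Ideal R, I ≠ ⊥ → (I • ⊤ : Submodule R M) ≠ ⊥ := by
    intro I hI h
    apply hI
    rw [eq_bot_iff, ← hfaith]
    intro r hr
    refine Submodule.mem_annihilator.mpr fun m _ => ?_
    have hm : r • m ∈ (I • ⊤ : Submodule R M) :=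
      Submodule.smul_mem_smul hr Submodule.mem_top
    rw [h] at hm
    simpa using hm
  have hne_bot : ∀ n : ℕ, Ideal.span {a ^ (n + 1)} ≠ ⊥ := by
    intro n h
    exact hpow (n + 1) (Ideal.span_singleton_eq_bot.mp h)
  have hne_top : ∀ n : ℕ, Ideal.span {a ^ (n + 1)} ≠ ⊤ := by
    intro n h
    have hu : IsUnit (a ^ (n + 1)) := Ideal.span_singleton_eq_top.mp h
    obtain ⟨b, hb⟩ := hu.exists_right_inv
    have h0 := Ideal.mem_jacobson_bot.mp ha (-(a ^ n * b))
    have : a * -(a ^ n * b) + 1 = 0 := by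
      have : a * (a ^ n * b) = 1 := by
        rw [← mul_assoc, ← pow_succ']; exact hb
      linear_combination -this
    rw [this] at h0
    exact not_isUnit_zero h0
  set v : ℕ → {I : Ideal R // I ≠ ⊥ ∧ I ≠ ⊤} :=
    fun n => ⟨Ideal.span {a ^ (n + 1)}, hne_bot n, hne_top n⟩ with hv
  -- distinctness of the span ideals
  have hdist : ∀ i j : ℕ, i < j → Ideal.span {a ^ (i + 1)} ≠ Ideal.span {a ^ (j + 1)} := by
    intro i j hij heq
    have hmem : a ^ (i + 1) ∈ Ideal.span {a ^ (j + 1)} := by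
      rw [← heq]; exact Ideal.mem_span_singleton_self _
    obtain ⟨r, hr⟩ := Ideal.mem_span_singleton'.mp hmem
    set d : ℕ := j - i - 1 with hd
    have hj1 : j + 1 = (i + 1) + (d + 1) := by omega
    rw [hj1, pow_add] at hr
    have hu := Ideal.mem_jacobson_bot.mp ha (-(r * a ^ d))
    have h0 : a ^ (i + 1) * (a * -(r * a ^ d) + 1) = 0 := by
      linear_combination -hr
    exact hpow (i + 1) ((hu.mul_left_eq_zero).mp h0)
  have hinj : Function.Injective v := by
    intro i j hij
    by_contra hne
    have h' : Ideal.span {a ^ (i + 1)} = Ideal.span {a ^ (j + 1)} :=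
      congrArg Subtype.val hij
    rcases lt_or_gt_of_ne hne with h | h
    · exact hdist i j h h'
    · exact hdist j i h h'.symm
  -- adjacency
  have hadj : ∀ i j : ℕ, i ≠ j → (interGraph R M).Adj (v i) (v j) := by
    intro i j hij
    refine ⟨fun h => hij (hinj h), fun h => ?_⟩
    set k : ℕ := max i j with hk
    have hle : ∀ l : ℕ, l ≤ k → Ideal.span {a ^ (k + 1)} ≤ Ideal.span {a ^ (l + 1)} :=
      fun l hl => Ideal.span_singleton_le_span_singleton.mpr
        (pow_dvd_pow a (by omega))
    have hsub : (Ideal.span {a ^ (k + 1)} • ⊤ : Submodule R M) ≤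
        (v i).1 • ⊤ ⊓ (v j).1 • ⊤ :=
      le_inf (Submodule.smul_mono_left (hle i (le_max_left i j)))
        (Submodule.smul_mono_left (hle j (le_max_right i j)))
    rw [h, le_bot_iff] at hsub
    exact hsmul _ (hne_bot k) hsub
  -- arbitrarily large cliques
  have hcl : ∀ n : ℕ, (interGraph R M).IsNClique n ((Finset.range n).image v) := by
    intro n
    constructor
    · intro x hx y hy hxy
      simp only [Finset.coe_image, Set.mem_image] at hx hy
      obtain ⟨i, _, rfl⟩ := hx
      obtain ⟨j, _, rfl⟩ := hy
      exact hadj i j fun h => hxy (by rw [h])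
    · rw [Finset.card_image_of_injective _ hinj, Finset.card_range]
  obtain ⟨B, hB⟩ := hfin
  have : B + 1 ≤ B := hB ⟨_, hcl (B + 1)⟩
  omega
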